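/- Let A be a finite set of non-negative integers with 0 ∈ A, gcd(A) = 1, and b := max A (so b ≥ 1). Set T := ⋃_{h≥0} hA and T' := ⋃_{h≥0} h(b−A), where b−A := {b − x : x ∈ A}. For each r ∈ {0, …, b−1} let m_r be the least element of T congruent to r mod b, and m'_r the least element of T' congruent to r mod b (these exist since gcd(A) = 1). Then for every natural number h with h ≥ 2b − 4 (as integers), the identity (1 − x^b) · ∑_{n ∈ hA} x^n = ∑_{r=0}^{b−1} x^{m_r} − ∑_{r=0}^{b−1} x^{b(h+1) − m'_r} holds in the ring of Laurent polynomials ℤ[x, x^{−1}]. -/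

import Mathlib

open Pointwise

/-- The `h`-fold sumset `hA` of a finite set of naturals:
`0A = {0}` and `(n+1)A = A + nA`. -/
def iterFin (A : Finset ℕ) : ℕ → Finset ℕ
  | 0 => {0}
  | n + 1 => A + iterFin A n

/-- The tangent cone at `0`: the union of all the iterated sumsets of `A`. -/
def tangentSet (A : Finset ℕ) : Set ℕ := ⋃ h : ℕ, (iterFin A h : Set ℕ)

lemma mem_tangent_iff {A : Finset ℕ} {n : ℕ} :
    n ∈ tangentSet A ↔ ∃ h, n ∈ iterFin A h := by
  simp [tangentSet]

lemma add_mem_iterFin {A : Finset ℕ} :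
    ∀ {j k a x : ℕ}, a ∈ iterFin A j → x ∈ iterFin A k → a + x ∈ iterFin A (j + k) := by
  intro j
  induction j with
  | zero => intro k a x ha hx; simp [iterFin] at ha; subst ha; simpa using hx
  | succ j ih =>
      intro k a x ha hx
      rw [iterFin] at ha
      obtain ⟨c, hc, y, hy, rfl⟩ := Finset.mem_add.mp ha
      have : c + (y + x) ∈ iterFin A (j + k + 1) := by
        rw [iterFin]; exact Finset.add_mem_add hc (ih hy hx)
      simpa [add_assoc, Nat.succ_add, Nat.add_comm, Nat.add_left_comm] using this

lemma iterFin_mono {A : Finset ℕ} (h0 : 0 ∈ A) {j k : ℕ} (hjk : j ≤ k) :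
    iterFin A j ⊆ iterFin A k := by
  intro n hn
  obtain ⟨d, rfl⟩ := Nat.exists_eq_add_of_le hjk
  clear hjk
  induction d with
  | zero => simpa using hn
  | succ d ih =>
      have h1 : (0 : ℕ) ∈ iterFin A 1 := by
        rw [iterFin]
        exact Finset.add_mem_add h0 (show (0:ℕ) ∈ ({0} : Finset ℕ) from Finset.mem_singleton_self 0)
      have := add_mem_iterFin (A := A) h1 ih
      simp only [Nat.zero_add] at this
      rwa [show j + (d + 1) = 1 + (j + d) by omega]

lemma iterFin_le {A : Finset ℕ} {b : ℕ} (hub : ∀ a ∈ A, a ≤ b) :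
    ∀ {h n : ℕ}, n ∈ iterFin A h → n ≤ b * h := by
  intro h
  induction h with
  | zero => intro n hn; simp [iterFin] at hn; omega
  | succ h ih =>
      intro n hn
      rw [iterFin] at hn
      obtain ⟨a, ha, x, hx, rfl⟩ := Finset.mem_add.mp hn
      have := ih hx
      have := hub a ha
      nlinarith

lemma bmul_mem {A : Finset ℕ} {b : ℕ} (hbA : b ∈ A) : ∀ k, b * k ∈ iterFin A k := by
  intro k
  induction k with
  | zero => simp [iterFin]
  | succ k ih =>
      have : b + b * k ∈ iterFin A (k + 1) := by
        rw [iterFin]; exact Finset.add_mem_add hbA ih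
      simpa [Nat.mul_succ, Nat.add_comm] using this

lemma reflect_mem {A : Finset ℕ} {b : ℕ} (hub : ∀ a ∈ A, a ≤ b) :
    ∀ {h n : ℕ}, n ∈ iterFin A h → b * h - n ∈ iterFin (A.image fun x => b - x) h := by
  intro h
  induction h with
  | zero => intro n hn; simp [iterFin] at hn ⊢
  | succ h ih =>
      intro n hn
      rw [iterFin] at hn
      obtain ⟨a, ha, x, hx, rfl⟩ := Finset.mem_add.mp hn
      have hxle : x ≤ b * h := iterFin_le hub hx
      have hab : a ≤ b := hub a ha
      have : (b - a) + (b * h - x) ∈ iterFin (A.image fun x => b - x) (h + 1) := by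
        rw [iterFin]
        exact Finset.add_mem_add (Finset.mem_image.mpr ⟨a, ha, rfl⟩) (ih hx)
      have heq : b * (h + 1) - (a + x) = (b - a) + (b * h - x) := by
        rw [Nat.mul_succ]; omega
      rw [heq]; exact this

lemma image_image_eq {A : Finset ℕ} {b : ℕ} (hub : ∀ a ∈ A, a ≤ b) :
    ((A.image fun x => b - x).image fun x => b - x) = A := by
  ext n
  simp only [Finset.mem_image]
  constructor
  · rintro ⟨y, ⟨z, hz, rfl⟩, rfl⟩
    have := hub z hz
    simpa [Nat.sub_sub_self this] using hz
  · intro hn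
    exact ⟨b - n, ⟨n, hn, rfl⟩, Nat.sub_sub_self (hub n hn)⟩

lemma add_mem_tangent {A : Finset ℕ} {a y : ℕ} (ha : a ∈ A) (hy : y ∈ tangentSet A) :
    a + y ∈ tangentSet A := by
  obtain ⟨k, hk⟩ := mem_tangent_iff.mp hy
  refine mem_tangent_iff.mpr ⟨k + 1, ?_⟩
  rw [iterFin]
  exact Finset.add_mem_add ha hk

lemma zero_mem_tangent (A : Finset ℕ) : (0 : ℕ) ∈ tangentSet A :=
  mem_tangent_iff.mpr ⟨0, Finset.mem_singleton_self 0⟩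

/-- Key structure lemma: a minimal element of its residue class in the tangent set
has a representation with at most `b-1` parts, each of size at most `b-1`. -/
lemma min_rep {A : Finset ℕ} {b : ℕ} (hb1 : 1 ≤ b) (hub : ∀ a ∈ A, a ≤ b)
    (m : ℕ → ℕ)
    (hm : ∀ r < b, m r ∈ tangentSet A ∧ m r % b = r ∧
      ∀ n ∈ tangentSet A, n % b = r → m r ≤ n) :
    ∀ n, n ∈ tangentSet A → (∀ y ∈ tangentSet A, y % b = n % b → n ≤ y) →
      ∃ j, n ∈ iterFin A j ∧ n ≤ j * (b - 1) ∧
        j + 1 ≤ ((Finset.range b).filter fun r => m r ≤ n).card := by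
  intro n
  induction n using Nat.strong_induction_on with
  | _ n IH =>
    intro hnT hnmin
    rcases Nat.eq_zero_or_pos n with rfl | hnpos
    · refine ⟨0, Finset.mem_singleton_self 0, Nat.zero_le _, ?_⟩
      have h00 : m 0 ≤ 0 := (hm 0 hb1).2.2 0 (zero_mem_tangent A) (Nat.zero_mod b)
      have : (0 : ℕ) ∈ (Finset.range b).filter fun r => m r ≤ 0 :=
        Finset.mem_filter.mpr ⟨Finset.mem_range.mpr hb1, h00⟩
      simpa using Finset.card_pos.mpr ⟨0, this⟩
    · -- pick minimal number of parts
      obtain ⟨k, hk⟩ := mem_tangent_iff.mp hnT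
      have hex : ∃ k, n ∈ iterFin A k := ⟨k, hk⟩
      classical
      set k0 := Nat.find hex with hk0
      have hk0mem : n ∈ iterFin A k0 := Nat.find_spec hex
      have hk0pos : 0 < k0 := by
        rcases Nat.eq_zero_or_pos k0 with h | h
        · exfalso; rw [h] at hk0mem
          simp [iterFin] at hk0mem; omega
        · exact h
      obtain ⟨k1, hk1⟩ := Nat.exists_eq_add_of_lt hk0pos
      rw [hk1, Nat.zero_add] at hk0mem
      rw [iterFin] at hk0mem
      obtain ⟨a, ha, x, hx, hax⟩ := Finset.mem_add.mp hk0mem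
      have hxT : x ∈ tangentSet A := mem_tangent_iff.mpr ⟨k1, hx⟩
      have hapos : 0 < a := by
        rcases Nat.eq_zero_or_pos a with rfl | h
        · exfalso
          rw [Nat.zero_add] at hax
          have hmem : n ∈ iterFin A k1 := hax ▸ hx
          exact Nat.find_min hex (by omega) hmem
        · exact h
      have hab : a ≤ b := hub a ha
      have haneb : a ≠ b := by
        intro hEq
        have hxmod : x % b = n % b := by
          rw [← hax, hEq, Nat.add_mod_left]
        have := hnmin x hxT hxmod
        omega
      have hxmin : ∀ y ∈ tangentSet A, y % b = x % b → x ≤ y := by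
        intro y hyT hymod
        have hayT : a + y ∈ tangentSet A := add_mem_tangent ha hyT
        have haymod : (a + y) % b = n % b := by
          rw [← hax, Nat.add_mod, hymod, ← Nat.add_mod]
        have := hnmin (a + y) hayT haymod
        omega
      obtain ⟨j', hj1, hj2, hj3⟩ := IH x (by omega) hxT hxmin
      have ha1 : a ∈ iterFin A 1 := by
        have : a + 0 ∈ A + iterFin A 0 :=
          Finset.add_mem_add ha (show (0:ℕ) ∈ ({0}:Finset ℕ) from Finset.mem_singleton_self 0)
        rw [iterFin]
        simpa using this
      refine ⟨j' + 1, ?_, ?_, ?_⟩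
      · have := add_mem_iterFin (A := A) ha1 hj1
        rw [hax] at this
        simpa [Nat.add_comm] using this
      · have : (j' + 1) * (b - 1) = j' * (b - 1) + (b - 1) := by ring
        omega
      · set r := n % b with hr
        have hrb : r < b := Nat.mod_lt _ hb1
        have hmrn : m r = n := by
          have h1 : m r ≤ n := (hm r hrb).2.2 n hnT rfl
          have h2 : n ≤ m r := hnmin (m r) (hm r hrb).1 (hm r hrb).2.1
          omega
        have hsub : insert r ((Finset.range b).filter fun t => m t ≤ x) ⊆
            (Finset.range b).filter fun t => m t ≤ n := by
          intro t ht
          rcases Finset.mem_insert.mp ht with rfl | ht'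
          · exact Finset.mem_filter.mpr ⟨Finset.mem_range.mpr hrb, le_of_eq hmrn⟩
          · obtain ⟨ht1, ht2⟩ := Finset.mem_filter.mp ht'
            exact Finset.mem_filter.mpr ⟨ht1, by omega⟩
        have hnotmem : r ∉ (Finset.range b).filter fun t => m t ≤ x := by
          intro hmem
          have := (Finset.mem_filter.mp hmem).2
          omega
        have hcard := Finset.card_le_card hsub
        rw [Finset.card_insert_of_notMem hnotmem] at hcard
        omega

lemma min_rep' {A : Finset ℕ} {b : ℕ} (hb1 : 1 ≤ b) (hub : ∀ a ∈ A, a ≤ b)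
    (m : ℕ → ℕ)
    (hm : ∀ r < b, m r ∈ tangentSet A ∧ m r % b = r ∧
      ∀ n ∈ tangentSet A, n % b = r → m r ≤ n) :
    ∀ r < b, ∃ j, m r ∈ iterFin A j ∧ m r ≤ j * (b - 1) ∧ j + 1 ≤ b := by
  intro r hr
  obtain ⟨j, hj1, hj2, hj3⟩ := min_rep hb1 hub m hm (m r) (hm r hr).1
    (fun y hy hymod => (hm r hr).2.2 y hy (by rw [hymod, (hm r hr).2.1]))
  refine ⟨j, hj1, hj2, ?_⟩
  calc j + 1 ≤ ((Finset.range b).filter fun t => m t ≤ m r).card := hj3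
    _ ≤ (Finset.range b).card := Finset.card_le_card (Finset.filter_subset _ _)
    _ = b := Finset.card_range b

lemma mod_sub_mod {b h n : ℕ} (hb1 : 1 ≤ b) (hn : n ≤ b * h) :
    (b * h - n) % b = (b - n % b) % b := by
  have hdm : b * (n / b) + n % b = n := Nat.div_add_mod n b
  set q := n / b
  set r := n % b with hrdef
  have hrb : r < b := Nat.mod_lt _ hb1
  rcases Nat.eq_zero_or_pos r with hr0 | hrpos
  · have hqh : q ≤ h := by
      by_contra hq
      have h5 : b * (h + 1) ≤ b * q := Nat.mul_le_mul_left b (by omega)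
      have h6 : b * (h + 1) = b * h + b := by ring
      omega
    obtain ⟨d, rfl⟩ := Nat.exists_eq_add_of_le hqh
    rw [show b * (q + d) = b * q + b * d from by ring]
    rw [hr0, Nat.sub_zero, Nat.mod_self]
    have : b * q + b * d - n = b * d := by omega
    rw [this, Nat.mul_mod_right]
  · have hqh : q + 1 ≤ h := by
      by_contra hq
      have h5 : b * h ≤ b * q := Nat.mul_le_mul_left b (by omega)
      omega
    obtain ⟨e, rfl⟩ := Nat.exists_eq_add_of_le hqh
    rw [show b * (q + 1 + e) = b * q + b + b * e from by ring]
    have h1 : b * q + b + b * e - n = b * e + (b - r) := by omega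
    rw [h1, Nat.mul_add_mod]

lemma mem_class_iff {A : Finset ℕ} {b : ℕ} (h0 : 0 ∈ A) (hb1 : 1 ≤ b)
    (hbA : b ∈ A) (hub : ∀ a ∈ A, a ≤ b)
    (m m' : ℕ → ℕ)
    (hm : ∀ r < b, m r ∈ tangentSet A ∧ m r % b = r ∧
      ∀ n ∈ tangentSet A, n % b = r → m r ≤ n)
    (hm' : ∀ r < b, m' r ∈ tangentSet (A.image fun x => b - x) ∧ m' r % b = r ∧
      ∀ n ∈ tangentSet (A.image fun x => b - x), n % b = r → m' r ≤ n)
    {h : ℕ} (hh : 2 * b ≤ h + 4) {n r : ℕ} (hr : r < b) (hnr : n % b = r) :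
    n ∈ iterFin A h ↔ m r ≤ n ∧ n + m' ((b - r) % b) ≤ b * h := by
  set A' : Finset ℕ := A.image fun x => b - x with hA'
  have h0' : (0 : ℕ) ∈ A' := Finset.mem_image.mpr ⟨b, hbA, Nat.sub_self b⟩
  have hbA' : b ∈ A' := Finset.mem_image.mpr ⟨0, h0, Nat.sub_zero b⟩
  have hub' : ∀ a ∈ A', a ≤ b := by
    rintro a ha
    obtain ⟨x, _, rfl⟩ := Finset.mem_image.mp ha
    omega
  set s := (b - r) % b with hs
  have hsb : s < b := Nat.mod_lt _ hb1
  constructor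
  · intro hnA
    have hnT : n ∈ tangentSet A := mem_tangent_iff.mpr ⟨h, hnA⟩
    have h1 : m r ≤ n := (hm r hr).2.2 n hnT hnr
    have h2 : n ≤ b * h := iterFin_le hub hnA
    have h3 : b * h - n ∈ iterFin A' h := reflect_mem hub hnA
    have h4 : (b * h - n) % b = s := by rw [mod_sub_mod hb1 h2, hnr]
    have h5 : m' s ≤ b * h - n :=
      (hm' s hsb).2.2 _ (mem_tangent_iff.mpr ⟨h, h3⟩) h4
    exact ⟨h1, by omega⟩
  · rintro ⟨h1, h2⟩
    rcases Nat.eq_zero_or_pos r with rfl | hrpos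
    · -- class of 0 : multiples of b
      have hbn : b ∣ n := Nat.dvd_of_mod_eq_zero hnr
      obtain ⟨c, rfl⟩ := hbn
      have hch : c ≤ h := by
        by_contra hc
        have h5 : b * (h + 1) ≤ b * c := Nat.mul_le_mul_left b (by omega)
        have h6 : b * (h + 1) = b * h + b := by ring
        omega
      exact iterFin_mono h0 hch (bmul_mem hbA c)
    · have hsval : s = b - r := Nat.mod_eq_of_lt (by omega)
      obtain ⟨j1, hj1, hj1b, hj1c⟩ := min_rep' hb1 hub m hm r hr
      obtain ⟨j2, hj2, hj2b, hj2c⟩ := min_rep' hb1 hub' m' hm' s hsb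
      -- write n = m r + b * k
      have hmrn : m r % b = n % b := by rw [(hm r hr).2.1, hnr]
      have hdvd1 : b ∣ n - m r := (Nat.modEq_iff_dvd' h1).mp hmrn
      obtain ⟨k, hk⟩ := hdvd1
      have hkn : n = m r + b * k := by omega
      -- write b * h - n = m' s + b * l
      have hnle : n ≤ b * h := by omega
      have hms : m' s ≤ b * h - n := by omega
      have hmod2 : m' s % b = (b * h - n) % b := by
        rw [(hm' s hsb).2.1, mod_sub_mod hb1 hnle, hnr]
      have hdvd2 : b ∣ (b * h - n) - m' s := (Nat.modEq_iff_dvd' hms).mp hmod2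
      obtain ⟨l, hl⟩ := hdvd2
      have hln : b * h = n + m' s + b * l := by omega
      -- k + l + 1 ≤ h
      have hmrr : r ≤ m r := by
        have := Nat.mod_le (m r) b
        rw [(hm r hr).2.1] at this
        exact this
      have hmss : s ≤ m' s := by
        have := Nat.mod_le (m' s) b
        rw [(hm' s hsb).2.1] at this
        exact this
      have hkl : k + l + 1 ≤ h := by
        have hexp : b * (k + l + 1) = b * k + b * l + b := by ring
        have hble : b * (k + l + 1) ≤ b * h := by omega
        exact Nat.le_of_mul_le_mul_left hble (by omega)
      by_cases hc1 : j1 + k ≤ h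
      · have : m r + b * k ∈ iterFin A (j1 + k) :=
          add_mem_iterFin hj1 (bmul_mem hbA k)
        rw [← hkn] at this
        exact iterFin_mono h0 hc1 this
      · by_cases hc2 : j2 + l ≤ h
        · have hmem : m' s + b * l ∈ iterFin A' (j2 + l) :=
            add_mem_iterFin hj2 (bmul_mem hbA' l)
          have hmem2 : b * h - n ∈ iterFin A' h := by
            rw [show b * h - n = m' s + b * l from by omega]
            exact iterFin_mono h0' hc2 hmem
          have hthis := reflect_mem hub' hmem2
          have h9 : (A'.image fun x => b - x) = A := by
            rw [hA']; exact image_image_eq hub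
          rw [h9] at hthis
          rwa [show b * h - (b * h - n) = n from by omega] at hthis
        · omega

lemma class_struct {A : Finset ℕ} {b : ℕ} (h0 : 0 ∈ A) (hb1 : 1 ≤ b)
    (hbA : b ∈ A) (hub : ∀ a ∈ A, a ≤ b)
    (m m' : ℕ → ℕ)
    (hm : ∀ r < b, m r ∈ tangentSet A ∧ m r % b = r ∧
      ∀ n ∈ tangentSet A, n % b = r → m r ≤ n)
    (hm' : ∀ r < b, m' r ∈ tangentSet (A.image fun x => b - x) ∧ m' r % b = r ∧
      ∀ n ∈ tangentSet (A.image fun x => b - x), n % b = r → m' r ≤ n)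
    {h : ℕ} (hh : 2 * b ≤ h + 4) {r : ℕ} (hr : r < b) :
    ∃ K : ℕ, ((iterFin A h).filter fun n => n % b = r)
        = (Finset.range K).image (fun k => m r + b * k)
      ∧ m r + b * K + m' ((b - r) % b) = b * (h + 1) := by
  have h0' : (0 : ℕ) ∈ A.image fun x => b - x := Finset.mem_image.mpr ⟨b, hbA, Nat.sub_self b⟩
  have hub' : ∀ a ∈ A.image fun x => b - x, a ≤ b := by
    rintro a ha
    obtain ⟨x, _, rfl⟩ := Finset.mem_image.mp ha
    omega
  set s := (b - r) % b with hs
  have hsb : s < b := Nat.mod_lt _ hb1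
  obtain ⟨j1, hj1, hj1b, hj1c⟩ := min_rep' hb1 hub m hm r hr
  obtain ⟨j2, hj2, hj2b, hj2c⟩ := min_rep' hb1 hub' m' hm' s hsb
  -- the crucial bound
  have hbound : m r + m' s ≤ b * (h + 1) := by
    obtain ⟨c, rfl⟩ := Nat.exists_eq_add_of_le hb1
    rcases Nat.eq_zero_or_pos c with rfl | hc
    · simp only [Nat.add_zero] at hj1b hj2b ⊢
      omega
    · have e1 : m r ≤ c * c := le_trans hj1b (by
        have : j1 ≤ c := by omega
        have := Nat.mul_le_mul_right (1 + c - 1) this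
        simpa using Nat.mul_le_mul_right c (show j1 ≤ c by omega))
      have e2 : m' s ≤ c * c := le_trans hj2b (by
        simpa using Nat.mul_le_mul_right c (show j2 ≤ c by omega))
      have h2c : 2 * c ≤ h + 2 := by omega
      nlinarith
  -- divisibility
  have hdvd : b ∣ m r + m' s := by
    have hmod : (m r + m' s) % b = (r + s) % b := by
      rw [Nat.add_mod, (hm r hr).2.1, (hm' s hsb).2.1]
    have hrs : (r + s) % b = 0 := by
      rcases Nat.eq_zero_or_pos r with rfl | hrpos
      · have : s = 0 := by rw [hs, Nat.sub_zero, Nat.mod_self]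
        simp [this]
      · have : s = b - r := by rw [hs]; exact Nat.mod_eq_of_lt (by omega)
        rw [this, show r + (b - r) = b from by omega, Nat.mod_self]
    exact Nat.dvd_of_mod_eq_zero (hmod.trans hrs)
  have hdvd2 : b ∣ b * (h + 1) - (m r + m' s) := Nat.dvd_sub (Dvd.intro _ rfl) hdvd
  obtain ⟨K, hK⟩ := hdvd2
  have hKeq : m r + b * K + m' s = b * (h + 1) := by omega
  have hb2 : b * (h + 1) = b * h + b := by ring
  refine ⟨K, ?_, hKeq⟩
  ext n
  simp only [Finset.mem_filter, Finset.mem_image, Finset.mem_range]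
  constructor
  · rintro ⟨hnA, hnr⟩
    have hmm := (mem_class_iff h0 hb1 hbA hub m m' hm hm' hh hr hnr).mp hnA
    rw [← hs] at hmm
    obtain ⟨hle, hub2⟩ := hmm
    have hmrn : m r % b = n % b := by rw [(hm r hr).2.1, hnr]
    obtain ⟨k, hk⟩ := (Nat.modEq_iff_dvd' hle).mp hmrn
    have hexp : b * (k + 1) = b * k + b := by ring
    have hkb : b * (k + 1) ≤ b * K := by omega
    have hkK : k < K := by
      by_contra hcon
      have := Nat.mul_le_mul_left b (show K ≤ k + 1 by omega)
      have hexp2 : b * K ≤ b * k := Nat.mul_le_mul_left b (by omega)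
      omega
    exact ⟨k, hkK, by omega⟩
  · rintro ⟨k, hkK, rfl⟩
    have hnr : (m r + b * k) % b = r := by
      rw [Nat.add_mul_mod_self_left, (hm r hr).2.1]
    have hmm := mem_class_iff h0 hb1 hbA hub m m' hm hm' hh hr hnr
    rw [← hs] at hmm
    refine ⟨hmm.mpr ⟨Nat.le_add_right _ _, ?_⟩, hnr⟩
    have hmul : b * (k + 1) ≤ b * K := Nat.mul_le_mul_left b (by omega)
    have hexp : b * (k + 1) = b * k + b := by ring
    omega

theorem brion_formula_dim_one (A : Finset ℕ) (h0 : 0 ∈ A) (hgcd : A.gcd id = 1)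
    (b : ℕ) (hb : IsGreatest (A : Set ℕ) b) (hb1 : 1 ≤ b)
    (m m' : ℕ → ℕ)
    (hm : ∀ r < b, m r ∈ tangentSet A ∧ m r % b = r ∧
      ∀ n ∈ tangentSet A, n % b = r → m r ≤ n)
    (hm' : ∀ r < b, m' r ∈ tangentSet (A.image fun x => b - x) ∧ m' r % b = r ∧
      ∀ n ∈ tangentSet (A.image fun x => b - x), n % b = r → m' r ≤ n) :
    ∀ h : ℕ, (2 * b : ℤ) - 4 ≤ (h : ℤ) →
      ((1 : LaurentPolynomial ℤ) - LaurentPolynomial.T (b : ℤ)) *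
          ∑ n ∈ iterFin A h, LaurentPolynomial.T (n : ℤ)
        = (∑ r ∈ Finset.range b, LaurentPolynomial.T ((m r : ℤ)))
          - ∑ r ∈ Finset.range b,
              LaurentPolynomial.T ((b : ℤ) * ((h : ℤ) + 1) - (m' r : ℤ)) := by
  intro h hint
  have hh : 2 * b ≤ h + 4 := by omega
  have hub : ∀ a ∈ A, a ≤ b := fun a ha => hb.2 ha
  have hbA : b ∈ A := hb.1
  have hmaps : ∀ n ∈ iterFin A h, n % b ∈ Finset.range b :=
    fun n _ => Finset.mem_range.mpr (Nat.mod_lt _ hb1)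
  rw [← Finset.sum_fiberwise_of_maps_to hmaps (fun n => LaurentPolynomial.T (n : ℤ))]
  rw [Finset.mul_sum]
  have key : ∀ r ∈ Finset.range b,
      ((1 : LaurentPolynomial ℤ) - LaurentPolynomial.T (b : ℤ)) *
        ∑ n ∈ iterFin A h with n % b = r, LaurentPolynomial.T (n : ℤ)
      = LaurentPolynomial.T ((m r : ℤ))
        - LaurentPolynomial.T ((b : ℤ) * ((h : ℤ) + 1) - (m' ((b - r) % b) : ℤ)) := by
    intro r hrmem
    have hr : r < b := Finset.mem_range.mp hrmem
    obtain ⟨K, hKset, hKeq⟩ := class_struct h0 hb1 hbA hub m m' hm hm' hh hr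
    rw [hKset]
    rw [Finset.sum_image (by
      intro x _ y _ hxy
      have : b * x = b * y := by simp only at hxy; omega
      exact Nat.eq_of_mul_eq_mul_left (by omega) this)]
    have hterm : ∀ k ∈ Finset.range K,
        (LaurentPolynomial.T ((↑(m r + b * k) : ℤ)) : LaurentPolynomial ℤ)
        = LaurentPolynomial.T ((m r : ℤ)) * LaurentPolynomial.T ((b : ℤ)) ^ k := by
      intro k _
      rw [LaurentPolynomial.T_pow, ← LaurentPolynomial.T_add]
      congr 1
      push_cast
      ring
    rw [Finset.sum_congr rfl hterm, ← Finset.mul_sum]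
    have hgeom : ((1 : LaurentPolynomial ℤ) - LaurentPolynomial.T (b : ℤ)) *
        ∑ k ∈ Finset.range K, LaurentPolynomial.T ((b : ℤ)) ^ k
        = 1 - LaurentPolynomial.T ((b : ℤ)) ^ K := by
      have hg := geom_sum_mul (LaurentPolynomial.T (b : ℤ) : LaurentPolynomial ℤ) K
      linear_combination -hg
    calc ((1 : LaurentPolynomial ℤ) - LaurentPolynomial.T (b : ℤ)) *
          (LaurentPolynomial.T ((m r : ℤ)) * ∑ k ∈ Finset.range K, LaurentPolynomial.T ((b : ℤ)) ^ k)
        = LaurentPolynomial.T ((m r : ℤ)) *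
          (((1 : LaurentPolynomial ℤ) - LaurentPolynomial.T (b : ℤ)) *
            ∑ k ∈ Finset.range K, LaurentPolynomial.T ((b : ℤ)) ^ k) := by ring
      _ = LaurentPolynomial.T ((m r : ℤ)) * (1 - LaurentPolynomial.T ((b : ℤ)) ^ K) := by
          rw [hgeom]
      _ = LaurentPolynomial.T ((m r : ℤ))
          - LaurentPolynomial.T ((m r : ℤ)) * LaurentPolynomial.T ((b : ℤ)) ^ K := by ring
      _ = LaurentPolynomial.T ((m r : ℤ))
          - LaurentPolynomial.T ((b : ℤ) * ((h : ℤ) + 1) - (m' ((b - r) % b) : ℤ)) := by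
          rw [LaurentPolynomial.T_pow, ← LaurentPolynomial.T_add]
          congr 2
          have hc : (m r : ℤ) + b * K + m' ((b - r) % b) = b * (h + 1) := by
            exact_mod_cast hKeq
          push_cast
          linarith
  rw [Finset.sum_congr rfl key, Finset.sum_sub_distrib]
  congr 1
  refine Finset.sum_nbij' (i := fun r => (b - r) % b) (j := fun r => (b - r) % b)
    ?_ ?_ ?_ ?_ ?_
  · intro a _; exact Finset.mem_range.mpr (Nat.mod_lt _ hb1)
  · intro a _; exact Finset.mem_range.mpr (Nat.mod_lt _ hb1)
  · intro a ha
    have hab : a < b := Finset.mem_range.mp ha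
    show (b - (b - a) % b) % b = a
    rcases Nat.eq_zero_or_pos a with rfl | hpos
    · simp [Nat.mod_self]
    · rw [Nat.mod_eq_of_lt (show b - a < b by omega),
        show b - (b - a) = a from by omega, Nat.mod_eq_of_lt hab]
  · intro a ha
    have hab : a < b := Finset.mem_range.mp ha
    show (b - (b - a) % b) % b = a
    rcases Nat.eq_zero_or_pos a with rfl | hpos
    · simp [Nat.mod_self]
    · rw [Nat.mod_eq_of_lt (show b - a < b by omega),
        show b - (b - a) = a from by omega, Nat.mod_eq_of_lt hab]
  · intro a _; rfl
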